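/- Let μ_i be a sequence of finite Borel measures on the closed ball, each of total mass 1, converging weakly to μ, and suppose for every compact set K ⊂ B^n ∪ Ω(Γ) there is I_K such that μ_i(ΓK) = 0 for i > I_K, where the measures μ_i are Γ-quasi-invariant atomic measures on orbits Γz_i exiting every Γ-invariant compact set. Then the weak limit μ is supported on the limit set Λ(Γ), i.e., μ(Ω(Γ)) = 0. -/

import Mathlib

open MeasureTheory Filter Pointwise

/-- Let `X` be the closed unit ball (a compact metric space), `Γ = G` a
Kleinian group acting on it, `Y = B^n ∪ Ω(Γ)` the (open) complement of the limit set, on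
which every point has a compact neighborhood contained in `Y`.  Let `μ_i` be probability
measures converging weakly to `μ` (i.e. `∫ f dμ_i → ∫ f dμ` for every continuous `f`), and
suppose that for every compact `K ⊆ Y` there is `I_K` with `μ_i(ΓK) = 0` for `i ≥ I_K`
(the `μ_i` being atomic measures on orbits exiting every `Γ`-invariant compact set).  Then
the weak limit `μ` is supported on the limit set `Λ(Γ) = X \ Y`, i.e. `μ(Y) = 0` (in
particular `μ(Ω(Γ)) = 0`). -/
theorem weak_limit_supported_on_limit_set
    {X : Type*} [MetricSpace X] [CompactSpace X] [MeasurableSpace X] [BorelSpace X]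
    {G : Type*} [Group G] [MulAction G X]
    (Y : Set X) (hYopen : IsOpen Y)
    (hYloc : ∀ y ∈ Y, ∃ K : Set X, IsCompact K ∧ K ⊆ Y ∧ K ∈ nhds y)
    (μseq : ℕ → Measure X) [∀ i, IsProbabilityMeasure (μseq i)]
    (μ : Measure X) [IsProbabilityMeasure μ]
    (hweak : ∀ f : C(X, ℝ),
      Tendsto (fun i => ∫ x, f x ∂(μseq i)) atTop (nhds (∫ x, f x ∂μ)))
    (hnull : ∀ K : Set X, IsCompact K → K ⊆ Y →
      ∃ N : ℕ, ∀ i ≥ N, μseq i (⋃ g : G, g • K) = 0) :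
    μ Y = 0 := by
  -- It suffices to show that every compact subset of `Y` has `μ`-measure zero,
  -- by inner regularity of `μ`.
  have key : ∀ K : Set X, K ⊆ Y → IsCompact K → μ K = 0 := by
    intro K hKY hK
    -- Enlarge `K` to a compact `K' ⊆ Y` containing `K` in its interior.
    obtain ⟨K', hK'comp, hK'Y, hKint⟩ :
        ∃ K' : Set X, IsCompact K' ∧ K' ⊆ Y ∧ K ⊆ interior K' := by
      choose! C hCcomp hCY hCnhds using hYloc
      obtain ⟨t, ht⟩ := hK.elim_nhds_subcover' (fun y hy => interior (C y))
        (fun y hy => (isOpen_interior).mem_nhds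
          (mem_interior_iff_mem_nhds.2 (hCnhds y (hKY hy))))
      refine ⟨⋃ y ∈ t, C y, t.isCompact_biUnion (fun y _ => hCcomp y (hKY y.2)),
        Set.iUnion₂_subset fun y _ => hCY y (hKY y.2), ht.trans ?_⟩
      refine Set.iUnion₂_subset fun y hy => interior_mono ?_
      intro z hz; exact Set.mem_biUnion hy hz
    -- Urysohn: `f = 0` outside `interior K'`, `f = 1` on `K`, `0 ≤ f ≤ 1`.
    obtain ⟨f, hf0, hf1, hf01⟩ :=
      exists_continuous_zero_one_of_isCompact
        (s := (interior K')ᶜ) (t := K)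
        (isOpen_interior.isClosed_compl.isCompact) hK.isClosed
        (Set.disjoint_compl_left_iff_subset.2 hKint)
    -- eventually the integrals vanish
    obtain ⟨N, hN⟩ := hnull K' hK'comp hK'Y
    have hK'sub : K' ⊆ ⋃ g : G, g • K' := by
      intro x hx
      exact Set.mem_iUnion.2 ⟨1, by simpa using hx⟩
    have hK'null : ∀ i ≥ N, μseq i K' = 0 := fun i hi =>
      measure_mono_null hK'sub (hN i hi)
    have hfle : ∀ x, f x ≤ Set.indicator K' (fun _ => (1:ℝ)) x := by
      intro x
      by_cases hx : x ∈ K'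
      · simpa [Set.indicator_of_mem hx] using (hf01 x).2
      · have hx' : x ∈ (interior K')ᶜ := fun h => hx (interior_subset h)
        simp [Set.indicator_of_notMem hx, hf0 hx']
    have hint0 : ∀ i ≥ N, ∫ x, f x ∂(μseq i) = 0 := by
      intro i hi
      have h1 : ∫ x, f x ∂(μseq i) ≤ ∫ x, Set.indicator K' (fun _ => (1:ℝ)) x ∂(μseq i) := by
        refine integral_mono (f.continuous.integrable_of_hasCompactSupport ?_) ?_ hfle
        · exact HasCompactSupport.of_compactSpace f
        · exact (integrable_indicator_iff hK'comp.isClosed.measurableSet).2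
            (integrableOn_const (measure_lt_top _ _).ne)
      rw [integral_indicator hK'comp.isClosed.measurableSet] at h1
      simp only [integral_const, smul_eq_mul, mul_one] at h1
      have h2 : (0:ℝ) ≤ ∫ x, f x ∂(μseq i) :=
        integral_nonneg fun x => (hf01 x).1
      have : ((μseq i).restrict K').real Set.univ = 0 := by
        rw [measureReal_def, Measure.restrict_apply_univ, hK'null i hi]; simp
      rw [this] at h1
      linarith
    -- hence the limit integral is zero
    have hlim : ∫ x, f x ∂μ = 0 := by
      have := hweak f
      have heq : (fun i => ∫ x, f x ∂(μseq i)) =ᶠ[atTop] fun _ => (0:ℝ) :=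
        eventually_atTop.2 ⟨N, hint0⟩
      have : Tendsto (fun _ : ℕ => (0:ℝ)) atTop (nhds (∫ x, f x ∂μ)) :=
        (hweak f).congr' heq
      exact (tendsto_const_nhds_iff.1 this).symm
    -- and `μ K ≤ ∫ f dμ = 0`
    have hKle : (μ K).toReal ≤ ∫ x, f x ∂μ := by
      have h1 : ∫ x, Set.indicator K (fun _ => (1:ℝ)) x ∂μ ≤ ∫ x, f x ∂μ := by
        refine integral_mono ((integrable_indicator_iff hK.isClosed.measurableSet).2
          (integrableOn_const (measure_lt_top _ _).ne))
          (f.continuous.integrable_of_hasCompactSupport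
            (HasCompactSupport.of_compactSpace f)) ?_
        intro x
        by_cases hx : x ∈ K
        · simp [Set.indicator_of_mem hx, hf1 hx]
        · simp [Set.indicator_of_notMem hx, (hf01 x).1]
      rwa [integral_indicator hK.isClosed.measurableSet, integral_const,
        smul_eq_mul, mul_one, measureReal_def, Measure.restrict_apply_univ] at h1
    rw [hlim] at hKle
    have := measure_lt_top μ K
    exact (ENNReal.toReal_eq_zero_iff _).1 (le_antisymm hKle ENNReal.toReal_nonneg) |>.resolve_right this.ne
  -- conclude by inner regularity
  rw [hYopen.measure_eq_iSup_isCompact]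
  simp only [ENNReal.iSup_eq_zero]
  intro K hKY hK
  exact key K hKY hK
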